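/- Let λ be a nonempty partition and n a positive integer. Then the number of semistandard Young tableaux of shape λ with entries in {1, …, n} equals the number of semistandard Young tableaux of shape λ̃ = (n·|λ|, λ_1, λ_2, …) and content μ = (|λ|, |λ|, …, |λ|) (n+1 parts each equal to |λ|). -/
import Mathlib


open scoped BigOperators

/-- A partition, 0-indexed: `p i` is the part `λ_{i+1}`; weakly decreasing, eventually zero. -/
def IsPartition (p : ℕ → ℕ) : Prop :=
  (∀ i, p (i + 1) ≤ p i) ∧ ∃ N, p N = 0

/-- `|λ| = ∑ᵢ λᵢ`. -/
noncomputable def psize (p : ℕ → ℕ) : ℕ := ∑ᶠ i, p i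

namespace CardSSYTAux

/-- A downward closed finset of naturals is an initial segment. -/
lemma eq_range_card {s : Finset ℕ} (h : ∀ a b : ℕ, a ≤ b → b ∈ s → a ∈ s) :
    s = Finset.range s.card := by
  have key : ∀ x, x ∈ s ↔ x < s.card := by
    intro x
    constructor
    · intro hx
      have hsub : Finset.range (x + 1) ⊆ s := by
        intro a ha
        exact h a x (by simpa [Nat.lt_succ_iff] using ha) hx
      have := Finset.card_le_card hsub
      simpa [Finset.card_range, Nat.succ_le_iff] using this
    · intro hx
      by_contra hxs
      have hsub : s ⊆ Finset.range x := by
        intro y hy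
        rcases lt_or_ge y x with h' | h'
        · simpa [Finset.mem_range] using h'
        · exact absurd (h x y h' hy) hxs
      have := Finset.card_le_card hsub
      simp [Finset.card_range] at this
      omega
  ext x; simp [key]

variable {p : ℕ → ℕ} {n : ℕ} {N : ℕ}

noncomputable def boxF (p : ℕ → ℕ) (N : ℕ) : Finset (ℕ × ℕ) :=
  (Finset.range N ×ˢ Finset.range (p 0 + 1)).filter fun x => x.2 < p x.1

lemma mem_boxF (hmono : ∀ i, p (i + 1) ≤ p i) {x : ℕ × ℕ} :
    x ∈ boxF p N ↔ x.1 < N ∧ x.2 < p x.1 := by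
  have hanti : Antitone p := antitone_nat_of_succ_le hmono
  constructor
  · intro hx
    simp only [boxF, Finset.mem_filter, Finset.mem_product, Finset.mem_range] at hx
    exact ⟨hx.1.1, hx.2⟩
  · rintro ⟨h1, h2⟩
    have : p x.1 ≤ p 0 := hanti (Nat.zero_le _)
    simp only [boxF, Finset.mem_filter, Finset.mem_product, Finset.mem_range]
    exact ⟨⟨h1, by omega⟩, h2⟩

lemma psize_eq_sum (hN : ∀ r, N ≤ r → p r = 0) :
    psize p = ∑ r ∈ Finset.range N, p r := by
  apply finsum_eq_sum_of_support_subset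
  intro r hr
  simp only [Function.mem_support] at hr
  simp only [Finset.coe_range, Set.mem_Iio]
  by_contra h
  exact hr (hN r (by omega))

lemma part_le_psize (hN : ∀ r, N ≤ r → p r = 0) (r : ℕ) : p r ≤ psize p := by
  rcases lt_or_ge r N with h | h
  · rw [psize_eq_sum hN]
    exact Finset.single_le_sum (fun i _ => Nat.zero_le _) (Finset.mem_range.mpr h)
  · simp [hN r h]

lemma card_boxF (hmono : ∀ i, p (i + 1) ≤ p i) (hN : ∀ r, N ≤ r → p r = 0) :
    (boxF p N).card = psize p := by
  rw [psize_eq_sum hN]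
  rw [Finset.card_eq_sum_card_fiberwise (f := Prod.fst) (t := Finset.range N)
    (fun x hx => Finset.mem_range.mpr ((mem_boxF hmono).mp hx).1)]
  refine Finset.sum_congr rfl fun r hr => ?_
  have : (boxF p N).filter (fun x => x.1 = r) = (Finset.range (p r)).image (fun c => (r, c)) := by
    ext ⟨a, b⟩
    simp only [Finset.mem_filter, mem_boxF hmono, Finset.mem_image, Finset.mem_range]
    constructor
    · rintro ⟨⟨h1, h2⟩, rfl⟩; exact ⟨b, h2, rfl⟩
    · rintro ⟨c, hc, h⟩
      obtain ⟨rfl, rfl⟩ := Prod.mk.injEq .. ▸ h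
      exact ⟨⟨Finset.mem_range.mp hr, hc⟩, rfl⟩
  rw [this, Finset.card_image_of_injective _ (fun a b hab => (Prod.mk.injEq .. ▸ hab).2),
    Finset.card_range]

lemma natCard_eq (hmono : ∀ i, p (i + 1) ≤ p i) (hN : ∀ r, N ≤ r → p r = 0)
    (Q : ℕ × ℕ → Prop) [DecidablePred Q] :
    Nat.card {x : ℕ × ℕ | x.2 < p x.1 ∧ Q x} = ((boxF p N).filter Q).card := by
  have hset : {x : ℕ × ℕ | x.2 < p x.1 ∧ Q x} = ↑((boxF p N).filter Q) := by
    ext x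
    simp only [Set.mem_setOf_eq, Finset.coe_filter, mem_boxF hmono, Set.mem_setOf_eq]
    constructor
    · rintro ⟨h1, h2⟩
      refine ⟨⟨?_, h1⟩, h2⟩
      by_contra h
      have := hN x.1 (by omega)
      omega
    · rintro ⟨⟨_, h1⟩, h2⟩; exact ⟨h1, h2⟩
  rw [hset, Nat.card_coe_set_eq, Set.ncard_coe_finset]


end CardSSYTAux

/-- A semistandard Young tableau of shape `λ` (0-indexed rows/columns: the box in row `r`,
column `c` belongs to the diagram iff `c < p r`) with entries in `{1, …, n}`: rows weakly
increase, columns strictly increase, and entries vanish outside the diagram. -/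
structure SSYT (p : ℕ → ℕ) (n : ℕ) where
  entry : ℕ → ℕ → ℕ
  pos : ∀ r c, c < p r → 1 ≤ entry r c
  le_bound : ∀ r c, c < p r → entry r c ≤ n
  row_weak : ∀ r c₁ c₂, c₁ ≤ c₂ → c₂ < p r → entry r c₁ ≤ entry r c₂
  col_strict : ∀ r₁ r₂ c, r₁ < r₂ → c < p r₂ → entry r₁ c < entry r₂ c
  zero_outside : ∀ r c, p r ≤ c → entry r c = 0

/-- A semistandard Young tableau of shape `λ` and content `μ` (0-indexed: exactly `μ i`
entries are equal to `i + 1`). -/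
structure SSYTContent (p : ℕ → ℕ) (μ : ℕ → ℕ) where
  entry : ℕ → ℕ → ℕ
  pos : ∀ r c, c < p r → 1 ≤ entry r c
  row_weak : ∀ r c₁ c₂, c₁ ≤ c₂ → c₂ < p r → entry r c₁ ≤ entry r c₂
  col_strict : ∀ r₁ r₂ c, r₁ < r₂ → c < p r₂ → entry r₁ c < entry r₂ c
  zero_outside : ∀ r c, p r ≤ c → entry r c = 0
  content : ∀ i : ℕ, Nat.card {x : ℕ × ℕ | x.2 < p x.1 ∧ entry x.1 x.2 = i + 1} = μ i

lemma SSYT.ext' {p n} {T U : SSYT p n} (h : T.entry = U.entry) : T = U := by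
  cases T; cases U; cases h; rfl

lemma SSYTContent.ext' {p μ} {T U : SSYTContent p μ} (h : T.entry = U.entry) : T = U := by
  cases T; cases U; cases h; rfl

namespace CardSSYTAux2

open CardSSYTAux

variable {p : ℕ → ℕ} {n : ℕ} {N : ℕ}

/-- Number of entries of `T` equal to `w`. -/
noncomputable def cnt (T : SSYT p n) (w : ℕ) : ℕ :=
  Nat.card {x : ℕ × ℕ | x.2 < p x.1 ∧ T.entry x.1 x.2 = w}

lemma cnt_eq_card (hmono : ∀ i, p (i + 1) ≤ p i) (hN : ∀ r, N ≤ r → p r = 0)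
    (T : SSYT p n) (w : ℕ) :
    cnt T w = ((boxF p N).filter fun x => T.entry x.1 x.2 = w).card := by
  unfold cnt
  rw [natCard_eq hmono hN (fun x => T.entry x.1 x.2 = w)]

lemma cnt_zero (hmono : ∀ i, p (i + 1) ≤ p i) (hN : ∀ r, N ≤ r → p r = 0)
    (T : SSYT p n) : cnt T 0 = 0 := by
  rw [cnt_eq_card hmono hN, Finset.card_eq_zero, Finset.filter_eq_empty_iff]
  intro x hx
  have := T.pos x.1 x.2 ((mem_boxF hmono).mp hx).2
  omega

lemma cnt_le (hmono : ∀ i, p (i + 1) ≤ p i) (hN : ∀ r, N ≤ r → p r = 0)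
    (T : SSYT p n) (w : ℕ) : cnt T w ≤ psize p := by
  rw [cnt_eq_card hmono hN, ← card_boxF hmono hN]
  exact Finset.card_filter_le _ _

lemma sum_cnt (hmono : ∀ i, p (i + 1) ≤ p i) (hN : ∀ r, N ≤ r → p r = 0)
    (T : SSYT p n) : ∑ w ∈ Finset.range (n + 1), cnt T w = psize p := by
  have h := Finset.card_eq_sum_card_fiberwise
    (f := fun x => T.entry x.1 x.2) (s := boxF p N) (t := Finset.range (n + 1))
    (fun x hx => Finset.mem_range.mpr
      (Nat.lt_succ_of_le (T.le_bound x.1 x.2 ((mem_boxF hmono).mp hx).2)))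
  rw [← card_boxF hmono hN, h]
  exact Finset.sum_congr rfl fun w _ => (cnt_eq_card hmono hN T w)

/-- Partial sums `g v = ∑_{w<v} (S - cnt w)`. -/
noncomputable def gpart (T : SSYT p n) (v : ℕ) : ℕ :=
  ∑ w ∈ Finset.range v, (psize p - cnt T w)

lemma gpart_succ (T : SSYT p n) (v : ℕ) :
    gpart T (v + 1) = gpart T v + (psize p - cnt T v) :=
  Finset.sum_range_succ _ _

lemma gpart_mono (T : SSYT p n) : Monotone (gpart T) :=
  monotone_nat_of_le_succ fun v => by rw [gpart_succ]; omega

lemma gpart_one (hmono : ∀ i, p (i + 1) ≤ p i) (hN : ∀ r, N ≤ r → p r = 0)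
    (T : SSYT p n) : gpart T 1 = psize p := by
  simp [gpart, cnt_zero hmono hN]

lemma gpart_top (hmono : ∀ i, p (i + 1) ≤ p i) (hN : ∀ r, N ≤ r → p r = 0)
    (T : SSYT p n) : gpart T (n + 1) = n * psize p := by
  unfold gpart
  rw [Finset.sum_tsub_distrib (Finset.range (n + 1)) (fun w _ => cnt_le hmono hN T w),
    sum_cnt hmono hN,
    Finset.sum_const, Finset.card_range, smul_eq_mul, mul_comm, Nat.mul_succ,
    Nat.add_sub_cancel, Nat.mul_comm]

/-- The top-row filling. -/
noncomputable def topE (T : SSYT p n) (c : ℕ) : ℕ :=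
  Nat.findGreatest (fun v => gpart T v ≤ c) n + 1

lemma topE_mono (T : SSYT p n) : Monotone (topE T) := by
  intro c c' hcc
  unfold topE
  have := Nat.findGreatest_mono (P := fun v => gpart T v ≤ c)
    (Q := fun v => gpart T v ≤ c') (fun v hv => hv.trans hcc) (le_refl n)
  omega

lemma topE_le (T : SSYT p n) (c : ℕ) : topE T c ≤ n + 1 := by
  unfold topE
  have := Nat.findGreatest_le (P := fun v => gpart T v ≤ c) n
  omega

lemma one_le_topE (T : SSYT p n) (c : ℕ) : 1 ≤ topE T c := Nat.le_add_left _ _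

lemma gpart_topE_le (T : SSYT p n) (c : ℕ) : gpart T (topE T c - 1) ≤ c := by
  have h0 : gpart T 0 ≤ c := by simp [gpart]
  have := Nat.findGreatest_spec (P := fun v => gpart T v ≤ c) (Nat.zero_le n) h0
  simpa [topE] using this

lemma lt_gpart_topE (hmono : ∀ i, p (i + 1) ≤ p i) (hN : ∀ r, N ≤ r → p r = 0)
    (T : SSYT p n) {c : ℕ} (hc : c < n * psize p) : c < gpart T (topE T c) := by
  set m := Nat.findGreatest (fun v => gpart T v ≤ c) n with hm
  have hmn : m ≤ n := Nat.findGreatest_le n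
  have htop : topE T c = m + 1 := rfl
  rw [htop]
  rcases eq_or_lt_of_le hmn with h | h
  · rw [h, gpart_top hmono hN]; exact hc
  · have := Nat.findGreatest_is_greatest (P := fun v => gpart T v ≤ c) (n := n)
      (Nat.lt_succ_self m) (by omega)
    simp only [Nat.succ_eq_add_one] at this
    omega

lemma topE_eq_iff (hmono : ∀ i, p (i + 1) ≤ p i) (hN : ∀ r, N ≤ r → p r = 0)
    (T : SSYT p n) {c v : ℕ} (hc : c < n * psize p) (hv1 : 1 ≤ v) :
    topE T c = v ↔ gpart T (v - 1) ≤ c ∧ c < gpart T v := by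
  constructor
  · rintro rfl
    exact ⟨gpart_topE_le T c, lt_gpart_topE hmono hN T hc⟩
  · rintro ⟨h1, h2⟩
    have hu1 : gpart T (topE T c - 1) ≤ c := gpart_topE_le T c
    have hu2 : c < gpart T (topE T c) := lt_gpart_topE hmono hN T hc
    have hut : 1 ≤ topE T c := one_le_topE T c
    by_contra hne
    rcases lt_or_gt_of_ne hne with h | h
    · have : gpart T (topE T c) ≤ gpart T (v - 1) := gpart_mono T (by omega)
      omega
    · have : gpart T v ≤ gpart T (topE T c - 1) := gpart_mono T (by omega)
      omega

lemma topE_eq_one (hmono : ∀ i, p (i + 1) ≤ p i) (hN : ∀ r, N ≤ r → p r = 0)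
    (T : SSYT p n) {c : ℕ} (hc : c < psize p) : topE T c = 1 := by
  have h1 : gpart T (topE T c - 1) ≤ c := gpart_topE_le T c
  by_contra h
  have h2 : 1 ≤ topE T c - 1 := by have := one_le_topE T c; omega
  have : gpart T 1 ≤ gpart T (topE T c - 1) := gpart_mono T h2
  rw [gpart_one hmono hN] at this
  omega

end CardSSYTAux2

namespace CardSSYTAux2

open CardSSYTAux

variable {p : ℕ → ℕ} {n : ℕ} {N : ℕ}

/-- Entry function of the enlarged tableau. -/
noncomputable def newE (T : SSYT p n) : ℕ → ℕ → ℕ := fun r c =>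
  if r = 0 then (if c < n * psize p then topE T c else 0)
  else (if c < p (r - 1) then T.entry (r - 1) c + 1 else 0)

lemma newE_zero (T : SSYT p n) (c : ℕ) :
    newE T 0 c = if c < n * psize p then topE T c else 0 := rfl

lemma newE_succ (T : SSYT p n) (r c : ℕ) :
    newE T (r + 1) c = if c < p r then T.entry r c + 1 else 0 := by
  simp [newE]

noncomputable def fwd (hmono : ∀ i, p (i + 1) ≤ p i) (hN : ∀ r, N ≤ r → p r = 0)
    (hn : 0 < n) (T : SSYT p n) :
    SSYTContent (fun r => if r = 0 then n * psize p else p (r - 1))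
      (fun i => if i < n + 1 then psize p else 0) where
  entry := newE T
  pos := by
    rintro (_ | r) c hc
    · have hc' : c < n * psize p := hc
      rw [newE_zero, if_pos hc']
      exact one_le_topE T c
    · have hc' : c < p r := hc
      rw [newE_succ, if_pos hc']
      omega
  row_weak := by
    rintro (_ | r) c₁ c₂ h12 h2
    · have h2' : c₂ < n * psize p := h2
      rw [newE_zero, newE_zero, if_pos h2', if_pos (lt_of_le_of_lt h12 h2')]
      exact topE_mono T h12
    · have h2' : c₂ < p r := h2
      rw [newE_succ, newE_succ, if_pos h2', if_pos (lt_of_le_of_lt h12 h2')]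
      exact Nat.add_le_add_right (T.row_weak r c₁ c₂ h12 h2') 1
  col_strict := by
    rintro r₁ (_ | r₂) c h12 hc2
    · omega
    · have hc2' : c < p r₂ := hc2
      have hanti : Antitone p := antitone_nat_of_succ_le hmono
      rcases r₁ with _ | r₁
      · have hcS : c < psize p :=
          lt_of_lt_of_le hc2' ((hanti (Nat.zero_le r₂)).trans (part_le_psize hN 0))
        have hcnS : c < n * psize p :=
          lt_of_lt_of_le hcS (Nat.le_mul_of_pos_left _ hn)
        rw [newE_zero, if_pos hcnS, newE_succ, if_pos hc2', topE_eq_one hmono hN T hcS]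
        have := T.pos r₂ c hc2'
        omega
      · have hr : r₁ < r₂ := by omega
        have hc1 : c < p r₁ := lt_of_lt_of_le hc2' (hanti (le_of_lt hr))
        rw [newE_succ, newE_succ, if_pos hc2', if_pos hc1]
        exact Nat.add_lt_add_right (T.col_strict r₁ r₂ c hr hc2') 1
  zero_outside := by
    rintro (_ | r) c hc
    · have hc' : n * psize p ≤ c := hc
      rw [newE_zero, if_neg (by omega)]
    · have hc' : p r ≤ c := hc
      rw [newE_succ, if_neg (by omega)]
  content := by
    intro i
    by_cases hi : i < n + 1
    · have key : {x : ℕ × ℕ |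
          x.2 < (fun r => if r = 0 then n * psize p else p (r - 1)) x.1 ∧
            newE T x.1 x.2 = i + 1} =
          ↑(((Finset.Ico (gpart T i) (gpart T (i + 1))).map
              ⟨fun c => ((0 : ℕ), c), fun a b h => (Prod.mk.injEq .. ▸ h).2⟩) ∪
            (((boxF p N).filter fun x => T.entry x.1 x.2 = i).map
              ⟨fun x => (x.1 + 1, x.2), fun a b h => by
                have h' := Prod.mk.injEq .. ▸ h
                exact Prod.ext (by omega) h'.2⟩)) := by
        ext ⟨r, c⟩
        simp only [Set.mem_setOf_eq, Finset.coe_union, Set.mem_union, Finset.coe_map,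
          Set.mem_image, Finset.mem_coe, Finset.mem_Ico, Finset.mem_filter,
          Function.Embedding.coeFn_mk]
        rcases r with _ | r
        · constructor
          · rintro ⟨hcnS, he⟩
            have hcnS' : c < n * psize p := hcnS
            rw [newE_zero, if_pos hcnS'] at he
            left
            refine ⟨c, ?_, rfl⟩
            have h := (topE_eq_iff hmono hN T hcnS' (show 1 ≤ i + 1 by omega)).mp he
            simpa using h
          · rintro (⟨c', hcc', hcc⟩ | ⟨x, _, hx⟩)
            · have hcc2 : c' = c := (Prod.mk.injEq .. ▸ hcc).2
              subst hcc2
              have hcnS : c' < n * psize p :=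
                lt_of_lt_of_le hcc'.2 ((gpart_mono T (by omega)).trans
                  (le_of_eq (gpart_top hmono hN T)))
              refine ⟨hcnS, ?_⟩
              rw [newE_zero, if_pos hcnS]
              exact (topE_eq_iff hmono hN T hcnS (show 1 ≤ i + 1 by omega)).mpr
                ⟨by simpa using hcc'.1, hcc'.2⟩
            · exact absurd (Prod.mk.injEq .. ▸ hx).1 (by omega)
        · constructor
          · rintro ⟨hc, he⟩
            have hc' : c < p r := hc
            rw [newE_succ, if_pos hc'] at he
            right
            refine ⟨(r, c), ⟨(mem_boxF hmono).mpr ⟨?_, hc'⟩,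
              (show T.entry r c = i by omega)⟩, rfl⟩
            by_contra h
            have := hN r (by omega)
            omega
          · rintro (⟨c', _, hcc⟩ | ⟨x, ⟨hx1, hx2⟩, hx⟩)
            · exact absurd (Prod.mk.injEq .. ▸ hcc).1 (by omega)
            · have h1 : x.1 + 1 = r + 1 := (Prod.mk.injEq .. ▸ hx).1
              have h2 : x.2 = c := (Prod.mk.injEq .. ▸ hx).2
              obtain ⟨-, hxc⟩ := (mem_boxF hmono).mp hx1
              have hx1e : x.1 = r := by omega
              rw [hx1e, h2] at hxc
              rw [hx1e, h2] at hx2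
              refine ⟨hxc, ?_⟩
              rw [newE_succ, if_pos hxc]
              omega
      rw [key, Nat.card_coe_set_eq, Set.ncard_coe_finset]
      rw [Finset.card_union_of_disjoint, Finset.card_map, Finset.card_map,
        Nat.card_Ico]
      · have h1 : gpart T (i + 1) - gpart T i = psize p - cnt T i := by
          rw [gpart_succ]; omega
        have h2 : ((boxF p N).filter fun x => T.entry x.1 x.2 = i).card = cnt T i :=
          (cnt_eq_card hmono hN T i).symm
        rw [h1, h2, if_pos hi]
        have := cnt_le hmono hN T i
        omega
      · rw [Finset.disjoint_left]
        rintro ⟨r, c⟩ ha hb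
        simp only [Finset.mem_map, Function.Embedding.coeFn_mk] at ha hb
        obtain ⟨c', -, hc'⟩ := ha
        obtain ⟨x, -, hx⟩ := hb
        have h1 := (Prod.mk.injEq .. ▸ hc').1
        have h2 := (Prod.mk.injEq .. ▸ hx).1
        omega
    · have key : {x : ℕ × ℕ |
          x.2 < (fun r => if r = 0 then n * psize p else p (r - 1)) x.1 ∧
            newE T x.1 x.2 = i + 1} = ∅ := by
        ext ⟨r, c⟩
        simp only [Set.mem_setOf_eq, Set.mem_empty_iff_false, iff_false, not_and]
        rcases r with _ | r
        · intro hc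
          have hc' : c < n * psize p := hc
          rw [newE_zero, if_pos hc']
          have := topE_le T c
          omega
        · intro hc
          have hc' : c < p r := hc
          rw [newE_succ, if_pos hc']
          have := T.le_bound r c hc'
          omega
      rw [key, if_neg hi]
      simp

lemma ptil_mono (hmono : ∀ i, p (i + 1) ≤ p i) (hN : ∀ r, N ≤ r → p r = 0)
    (hn : 0 < n) :
    ∀ i, (fun r => if r = 0 then n * psize p else p (r - 1)) (i + 1) ≤
      (fun r => if r = 0 then n * psize p else p (r - 1)) i := by
  rintro (_ | i)
  · show p 0 ≤ n * psize p
    exact (part_le_psize hN 0).trans (Nat.le_mul_of_pos_left _ hn)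
  · show p (i + 1) ≤ p i
    exact hmono i

lemma ptil_N (hN : ∀ r, N ≤ r → p r = 0) :
    ∀ r, N + 1 ≤ r → (fun r => if r = 0 then n * psize p else p (r - 1)) r = 0 := by
  rintro (_ | r) hr
  · omega
  · show p r = 0
    exact hN r (by omega)

lemma U_le_bound (hmono : ∀ i, p (i + 1) ≤ p i) (hN : ∀ r, N ≤ r → p r = 0)
    (hn : 0 < n)
    (U : SSYTContent (fun r => if r = 0 then n * psize p else p (r - 1))
      (fun i => if i < n + 1 then psize p else 0))
    (r c : ℕ) (hc : c < (fun r => if r = 0 then n * psize p else p (r - 1)) r) :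
    U.entry r c ≤ n + 1 := by
  by_contra h
  set w := U.entry r c with hw
  have hw2 : n + 2 ≤ w := by omega
  have hcont := U.content (w - 1)
  rw [if_neg (by omega)] at hcont
  rw [natCard_eq (ptil_mono hmono hN hn) (ptil_N hN)
    (fun x => U.entry x.1 x.2 = w - 1 + 1)] at hcont
  rw [Finset.card_eq_zero, Finset.filter_eq_empty_iff] at hcont
  have hrN : r < N + 1 := by
    by_contra hr
    have := ptil_N (n := n) hN r (by omega)
    simp only at hc this
    omega
  exact hcont ((mem_boxF (ptil_mono hmono hN hn) (x := (r, c))).mpr ⟨hrN, hc⟩)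
    (show U.entry r c = w - 1 + 1 by omega)

lemma U_ge_two (hmono : ∀ i, p (i + 1) ≤ p i) (hN : ∀ r, N ≤ r → p r = 0)
    (hn : 0 < n)
    (U : SSYTContent (fun r => if r = 0 then n * psize p else p (r - 1))
      (fun i => if i < n + 1 then psize p else 0))
    (r c : ℕ) (hc : c < p r) :
    2 ≤ U.entry (r + 1) c := by
  have hanti : Antitone p := antitone_nat_of_succ_le hmono
  have hcnS : c < n * psize p :=
    lt_of_lt_of_le (lt_of_lt_of_le hc ((hanti (Nat.zero_le r)).trans (part_le_psize hN 0)))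
      (Nat.le_mul_of_pos_left _ hn)
  have h1 : 1 ≤ U.entry 0 c := U.pos 0 c hcnS
  have h2 : U.entry 0 c < U.entry (r + 1) c :=
    U.col_strict 0 (r + 1) c (by omega) hc
  omega

noncomputable def bwd (hmono : ∀ i, p (i + 1) ≤ p i) (hN : ∀ r, N ≤ r → p r = 0)
    (hn : 0 < n)
    (U : SSYTContent (fun r => if r = 0 then n * psize p else p (r - 1))
      (fun i => if i < n + 1 then psize p else 0)) :
    SSYT p n where
  entry r c := U.entry (r + 1) c - 1
  pos := fun r c hc => by
    have := U_ge_two hmono hN hn U r c hc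
    show 1 ≤ U.entry (r + 1) c - 1
    omega
  le_bound := fun r c hc => by
    have := U_le_bound hmono hN hn U (r + 1) c hc
    show U.entry (r + 1) c - 1 ≤ n
    omega
  row_weak := fun r c₁ c₂ h12 h2 => by
    have := U.row_weak (r + 1) c₁ c₂ h12 h2
    show U.entry (r + 1) c₁ - 1 ≤ U.entry (r + 1) c₂ - 1
    omega
  col_strict := fun r₁ r₂ c h hc2 => by
    have hanti : Antitone p := antitone_nat_of_succ_le hmono
    have h1 := U.col_strict (r₁ + 1) (r₂ + 1) c (by omega) hc2
    have h2 := U_ge_two hmono hN hn U r₁ c (lt_of_lt_of_le hc2 (hanti (by omega)))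
    show U.entry (r₁ + 1) c - 1 < U.entry (r₂ + 1) c - 1
    omega
  zero_outside := fun r c hc => by
    have := U.zero_outside (r + 1) c hc
    show U.entry (r + 1) c - 1 = 0
    omega

lemma top_count (hmono : ∀ i, p (i + 1) ≤ p i) (hN : ∀ r, N ≤ r → p r = 0)
    (hn : 0 < n)
    (U : SSYTContent (fun r => if r = 0 then n * psize p else p (r - 1))
      (fun i => if i < n + 1 then psize p else 0))
    {w : ℕ} (hw1 : 1 ≤ w) (hw2 : w ≤ n + 1) :
    ((Finset.range (n * psize p)).filter fun c => U.entry 0 c = w).card =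
      psize p - cnt (bwd hmono hN hn U) (w - 1) := by
  have hcont := U.content (w - 1)
  rw [if_pos (by omega)] at hcont
  rw [natCard_eq (ptil_mono hmono hN hn) (ptil_N hN)
    (fun x => U.entry x.1 x.2 = w - 1 + 1)] at hcont
  have hww : w - 1 + 1 = w := by omega
  rw [hww] at hcont
  -- split the filtered box into row 0 and the rest
  have hsplit : ((boxF (fun r => if r = 0 then n * psize p else p (r - 1)) (N + 1)).filter
        fun x => U.entry x.1 x.2 = w) =
      (((Finset.range (n * psize p)).filter fun c => U.entry 0 c = w).map
          ⟨fun c => ((0 : ℕ), c), fun a b h => (Prod.mk.injEq .. ▸ h).2⟩) ∪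
        (((boxF p N).filter fun x => U.entry (x.1 + 1) x.2 = w).map
          ⟨fun x => (x.1 + 1, x.2), fun a b h => by
            have h' := Prod.mk.injEq .. ▸ h
            exact Prod.ext (by omega) h'.2⟩) := by
    ext ⟨r, c⟩
    simp only [Finset.mem_filter, Finset.mem_union, Finset.mem_map, Finset.mem_range,
      Function.Embedding.coeFn_mk,
      mem_boxF (p := fun r => if r = 0 then n * psize p else p (r - 1))
        (ptil_mono hmono hN hn), mem_boxF hmono]
    rcases r with _ | r
    · constructor
      · rintro ⟨⟨-, hc⟩, he⟩
        exact Or.inl ⟨c, ⟨hc, he⟩, rfl⟩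
      · rintro (⟨c', ⟨h1, h2⟩, hcc⟩ | ⟨x, -, hx⟩)
        · have hcc2 : c' = c := (Prod.mk.injEq .. ▸ hcc).2
          subst hcc2
          exact ⟨⟨by omega, h1⟩, h2⟩
        · exact absurd (Prod.mk.injEq .. ▸ hx).1 (by omega)
    · constructor
      · rintro ⟨⟨hr, hc⟩, he⟩
        refine Or.inr ⟨(r, c), ⟨⟨by omega, hc⟩, he⟩, rfl⟩
      · rintro (⟨c', -, hcc⟩ | ⟨x, ⟨⟨hx1, hx2⟩, hx3⟩, hx⟩)
        · exact absurd (Prod.mk.injEq .. ▸ hcc).1 (by omega)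
        · have h1 : x.1 + 1 = r + 1 := (Prod.mk.injEq .. ▸ hx).1
          have h2 : x.2 = c := (Prod.mk.injEq .. ▸ hx).2
          have hx1e : x.1 = r := by omega
          rw [hx1e, h2] at hx2 hx3
          rw [hx1e] at hx1
          exact ⟨⟨by omega, hx2⟩, by rw [← hx1e, ← h2] at hx3 ⊢; exact hx3⟩
  rw [hsplit] at hcont
  rw [Finset.card_union_of_disjoint, Finset.card_map, Finset.card_map] at hcont
  · have hB : ((boxF p N).filter fun x => U.entry (x.1 + 1) x.2 = w).card =
        cnt (bwd hmono hN hn U) (w - 1) := by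
      rw [cnt_eq_card hmono hN]
      congr 1
      apply Finset.filter_congr
      intro x hx
      have hx2 := ((mem_boxF hmono).mp hx).2
      have h2 := U_ge_two hmono hN hn U x.1 x.2 hx2
      show U.entry (x.1 + 1) x.2 = w ↔ U.entry (x.1 + 1) x.2 - 1 = w - 1
      omega
    omega
  · rw [Finset.disjoint_left]
    rintro ⟨r, c⟩ ha hb
    simp only [Finset.mem_map, Function.Embedding.coeFn_mk] at ha hb
    obtain ⟨c', -, hc'⟩ := ha
    obtain ⟨x, -, hx⟩ := hb
    have h1 := (Prod.mk.injEq .. ▸ hc').1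
    have h2 := (Prod.mk.injEq .. ▸ hx).1
    omega

lemma top_initial (hmono : ∀ i, p (i + 1) ≤ p i) (hN : ∀ r, N ≤ r → p r = 0)
    (hn : 0 < n)
    (U : SSYTContent (fun r => if r = 0 then n * psize p else p (r - 1))
      (fun i => if i < n + 1 then psize p else 0)) :
    ∀ v, v ≤ n + 1 →
      (Finset.range (n * psize p)).filter (fun c => U.entry 0 c ≤ v) =
        Finset.range (gpart (bwd hmono hN hn U) v) := by
  intro v
  induction v with
  | zero =>
    intro _
    have : (Finset.range (n * psize p)).filter (fun c => U.entry 0 c ≤ 0) = ∅ := by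
      rw [Finset.filter_eq_empty_iff]
      intro c hc
      have := U.pos 0 c (Finset.mem_range.mp hc)
      omega
    rw [this]
    simp [gpart]
  | succ v ih =>
    intro hv
    have ihv := ih (by omega)
    have hsplit : (Finset.range (n * psize p)).filter (fun c => U.entry 0 c ≤ v + 1) =
        ((Finset.range (n * psize p)).filter (fun c => U.entry 0 c ≤ v)) ∪
          ((Finset.range (n * psize p)).filter (fun c => U.entry 0 c = v + 1)) := by
      ext c
      simp only [Finset.mem_filter, Finset.mem_union, Finset.mem_range]
      constructor
      · rintro ⟨h1, h2⟩
        rcases Nat.lt_or_ge (U.entry 0 c) (v + 1) with h | h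
        · exact Or.inl ⟨h1, by omega⟩
        · exact Or.inr ⟨h1, by omega⟩
      · rintro (⟨h1, h2⟩ | ⟨h1, h2⟩) <;> exact ⟨h1, by omega⟩
    have hdl : ∀ a b : ℕ, a ≤ b →
        b ∈ (Finset.range (n * psize p)).filter (fun c => U.entry 0 c ≤ v + 1) →
        a ∈ (Finset.range (n * psize p)).filter (fun c => U.entry 0 c ≤ v + 1) := by
      intro a b hab hb
      simp only [Finset.mem_filter, Finset.mem_range] at hb ⊢
      refine ⟨by omega, ?_⟩
      have := U.row_weak 0 a b hab hb.1
      omega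
    have hcard : ((Finset.range (n * psize p)).filter (fun c => U.entry 0 c ≤ v + 1)).card =
        gpart (bwd hmono hN hn U) (v + 1) := by
      rw [hsplit, Finset.card_union_of_disjoint, ihv, Finset.card_range,
        top_count hmono hN hn U (by omega) hv]
      · rw [gpart_succ]
        simp
      · rw [Finset.disjoint_left]
        intro c hc1 hc2
        simp only [Finset.mem_filter] at hc1 hc2
        omega
    rw [eq_range_card hdl, hcard]

lemma top_row_eq (hmono : ∀ i, p (i + 1) ≤ p i) (hN : ∀ r, N ≤ r → p r = 0)
    (hn : 0 < n)
    (U : SSYTContent (fun r => if r = 0 then n * psize p else p (r - 1))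
      (fun i => if i < n + 1 then psize p else 0))
    {c : ℕ} (hc : c < n * psize p) :
    topE (bwd hmono hN hn U) c = U.entry 0 c := by
  set w := U.entry 0 c with hw
  have h1 : 1 ≤ w := U.pos 0 c hc
  have h2 : w ≤ n + 1 := U_le_bound hmono hN hn U 0 c hc
  have hmem : c ∈ (Finset.range (n * psize p)).filter (fun c => U.entry 0 c ≤ w) := by
    simp only [Finset.mem_filter, Finset.mem_range]
    exact ⟨hc, le_refl _⟩
  rw [top_initial hmono hN hn U w h2, Finset.mem_range] at hmem
  have hnmem : c ∉ (Finset.range (n * psize p)).filter (fun c => U.entry 0 c ≤ w - 1) := by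
    simp only [Finset.mem_filter, Finset.mem_range]
    omega
  rw [top_initial hmono hN hn U (w - 1) (by omega), Finset.mem_range] at hnmem
  exact (topE_eq_iff hmono hN (bwd hmono hN hn U) hc h1).mpr ⟨by omega, hmem⟩

end CardSSYTAux2

/-- For a nonempty partition `λ` and a positive integer `n`, the number of semistandard
Young tableaux of shape `λ` with entries in `{1, …, n}` equals the number of semistandard
Young tableaux of shape `λ̃ = (n·|λ|, λ₁, λ₂, …)` and content `μ = (|λ|^{n+1})`. -/
theorem card_ssyt_eq_card_ssyt_content
    (p : ℕ → ℕ) (hp : IsPartition p) (hne : 0 < psize p) (n : ℕ) (hn : 0 < n) :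
    Nat.card (SSYT p n) =
      Nat.card (SSYTContent
        (fun r => if r = 0 then n * psize p else p (r - 1))
        (fun i => if i < n + 1 then psize p else 0)) := by
  obtain ⟨hmono, N, hN0⟩ := hp
  have hanti : Antitone p := antitone_nat_of_succ_le hmono
  have hN : ∀ r, N ≤ r → p r = 0 := fun r hr =>
    Nat.le_antisymm (hN0 ▸ hanti hr) (Nat.zero_le _)
  refine Nat.card_eq_of_bijective (CardSSYTAux2.fwd hmono hN hn)
    (Function.bijective_iff_has_inverse.mpr ⟨CardSSYTAux2.bwd hmono hN hn, ?_, ?_⟩)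
  · intro T
    apply SSYT.ext'
    funext r c
    show CardSSYTAux2.newE T (r + 1) c - 1 = T.entry r c
    rw [CardSSYTAux2.newE_succ]
    by_cases hc : c < p r
    · rw [if_pos hc]; omega
    · rw [if_neg hc, T.zero_outside r c (by omega)]
  · intro U
    apply SSYTContent.ext'
    funext r c
    rcases r with _ | r
    · show CardSSYTAux2.newE (CardSSYTAux2.bwd hmono hN hn U) 0 c = U.entry 0 c
      rw [CardSSYTAux2.newE_zero]
      by_cases hc : c < n * psize p
      · rw [if_pos hc]
        exact CardSSYTAux2.top_row_eq hmono hN hn U hc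
      · rw [if_neg hc]
        exact (U.zero_outside 0 c (show n * psize p ≤ c by omega)).symm
    · show CardSSYTAux2.newE (CardSSYTAux2.bwd hmono hN hn U) (r + 1) c = U.entry (r + 1) c
      rw [CardSSYTAux2.newE_succ]
      by_cases hc : c < p r
      · rw [if_pos hc]
        have h2 := CardSSYTAux2.U_ge_two hmono hN hn U r c hc
        show U.entry (r + 1) c - 1 + 1 = U.entry (r + 1) c
        omega
      · rw [if_neg hc]
        exact (U.zero_outside (r + 1) c (show p r ≤ c by omega)).symm
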